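/- Let n ≥ m+2 and let I be a nonempty independent set of P_n^m. Then there exists an independent set I' of P_n^m with min(I') ≤ m+1 and max(I') ≥ n−m such that γ_gr(P_n^m, I) ≤ γ_gr(P_n^m, I'). -/

import Mathlib

namespace GrundyDom

/-- Closed neighborhood N[v]. -/
def cn {V : Type*} (G : SimpleGraph V) (v : V) : Set V := insert v (G.neighborSet v)

/-- Union of closed neighborhoods of the vertices of a list. -/
def cnUnion {V : Type*} (G : SimpleGraph V) (L : List V) : Set V := ⋃ v ∈ L, cn G v

/-- Private neighborhood of `v` with respect to the first `i` entries of `S`: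
`N[v] \ (N[v_1] ∪ ... ∪ N[v_i])`. -/
def PN {V : Type*} (G : SimpleGraph V) (S : List V) (i : ℕ) (v : V) : Set V :=
  cn G v \ cnUnion G (S.take i)

/-- A legal dominating sequence: distinct vertices, dominating set, and every
vertex of the sequence has a nonempty private neighborhood w.r.t. its predecessors. -/
structure IsLegal {V : Type*} (G : SimpleGraph V) (S : List V) : Prop where
  nodup : S.Nodup
  dominates : ∀ v : V, ∃ u ∈ S, v ∈ cn G u
  legal : ∀ i : Fin S.length, (PN G S i.val (S.get i)).Nonempty

/-- The set `I_S` of vertices that footprint themselves in `S`. -/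
def selfFoot {V : Type*} (G : SimpleGraph V) (S : List V) : Set V :=
  {v | ∃ i : Fin S.length, S.get i = v ∧ v ∈ PN G S i.val v}

/-- Grundy domination number: maximum length of a legal dominating sequence. -/
noncomputable def gammaGr {V : Type*} (G : SimpleGraph V) : ℕ :=
  sSup {k | ∃ S : List V, IsLegal G S ∧ S.length = k}

/-- `γ_gr(G, I)`: maximum length of a legal dominating sequence `S` with `I_S = I`. -/
noncomputable def gammaGrOn {V : Type*} (G : SimpleGraph V) (I : Set V) : ℕ :=
  sSup {k | ∃ S : List V, IsLegal G S ∧ selfFoot G S = I ∧ S.length = k}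

/-- `γ_gr^u(G)`: maximum of `γ_gr(G, I)` over independent sets `I` containing `u`. -/
noncomputable def gammaGrVert {V : Type*} (G : SimpleGraph V) (u : V) : ℕ :=
  sSup {k | ∃ I : Set V, (∀ ⦃a⦄, a ∈ I → ∀ ⦃b⦄, b ∈ I → a ≠ b → ¬ G.Adj a b) ∧
    u ∈ I ∧ k = gammaGrOn G I}

/-- Independent set of a graph. -/
def IsIndep {V : Type*} (G : SimpleGraph V) (I : Set V) : Prop :=
  ∀ ⦃u⦄, u ∈ I → ∀ ⦃v⦄, v ∈ I → u ≠ v → ¬ G.Adj u v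

/-- The X-join product `G ↩ 𝓡`: replace each vertex `v` of `G` by the graph `R v`. -/
def XJoin {V : Type*} (G : SimpleGraph V) {W : V → Type*} (R : ∀ v, SimpleGraph (W v)) :
    SimpleGraph (Σ v, W v) where
  Adj x y := G.Adj x.1 y.1 ∨ ∃ h : x.1 = y.1, (R y.1).Adj (h ▸ x.2) y.2
  symm := by
    refine ⟨?_⟩
    rintro ⟨a, xa⟩ ⟨b, yb⟩ (h | ⟨h, hadj⟩)
    · exact Or.inl h.symm
    · dsimp at h hadj
      subst h
      exact Or.inr ⟨rfl, (R a).symm.symm _ _ hadj⟩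
  loopless := by
    refine ⟨?_⟩
    rintro ⟨a, xa⟩ (h | ⟨h, hadj⟩)
    · exact G.loopless.irrefl a h
    · exact (R a).loopless.irrefl xa hadj

/-- The lexicographic product `G ∘ H`. -/
def Lex {V W : Type*} (G : SimpleGraph V) (H : SimpleGraph W) : SimpleGraph (V × W) where
  Adj x y := G.Adj x.1 y.1 ∨ (x.1 = y.1 ∧ H.Adj x.2 y.2)
  symm := by
    refine ⟨?_⟩
    rintro x y (h | ⟨h1, h2⟩)
    · exact Or.inl h.symm
    · exact Or.inr ⟨h1.symm, h2.symm⟩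
  loopless := by
    refine ⟨?_⟩
    rintro x (h | ⟨_, h⟩)
    · exact G.loopless.irrefl _ h
    · exact H.loopless.irrefl _ h

/-- The replacement graph `G_{u ↩ H}`: replace the vertex `u` of `G` by `H`. -/
def Replace {V : Type*} (G : SimpleGraph V) (u : V) {W : Type*} (H : SimpleGraph W) :
    SimpleGraph ({v : V // v ≠ u} ⊕ W) where
  Adj x y :=
    match x, y with
    | Sum.inl a, Sum.inl b => G.Adj a.1 b.1
    | Sum.inl a, Sum.inr _ => G.Adj a.1 u
    | Sum.inr _, Sum.inl b => G.Adj u b.1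
    | Sum.inr h1, Sum.inr h2 => H.Adj h1 h2
  symm := by refine ⟨?_⟩; rintro (a|a) (b|b) h <;> exact h.symm
  loopless := by refine ⟨?_⟩; rintro (a|a) h <;> exact h.ne rfl

/-- `C_n^m`: the m-th power of the n-cycle, on vertex set `ZMod n`;
two vertices are adjacent iff their circular distance is between 1 and m. -/
def cyclePow (n m : ℕ) : SimpleGraph (ZMod n) where
  Adj i j := i ≠ j ∧ ∃ k : ℕ, 1 ≤ k ∧ k ≤ m ∧ (j = i + k ∨ i = j + k)
  symm := by
    refine ⟨?_⟩
    rintro i j ⟨hne, k, h1, h2, h3⟩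
    exact ⟨hne.symm, k, h1, h2, h3.symm⟩
  loopless := ⟨fun i h => h.1 rfl⟩

/-- `P_n^m`: the m-th power of the n-path, on vertex set `Fin n`
(vertex `i` represents the `(i+1)`-st vertex of the path);
two vertices adjacent iff their distance is between 1 and m. -/
def pathPow (n m : ℕ) : SimpleGraph (Fin n) where
  Adj i j := i ≠ j ∧ Nat.dist i.val j.val ≤ m
  symm := by
    refine ⟨?_⟩
    rintro i j ⟨hne, hd⟩
    exact ⟨hne.symm, by rwa [Nat.dist_comm]⟩
  loopless := ⟨fun i h => h.1 rfl⟩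

end GrundyDom

open GrundyDom Finset

section Aux

open GrundyDom

variable {V : Type*} (G : SimpleGraph V)

lemma mem_cn_self (v : V) : v ∈ cn G v := Set.mem_insert _ _

lemma mem_cn {u v : V} : v ∈ cn G u ↔ v = u ∨ G.Adj u v := by
  simp [cn, SimpleGraph.mem_neighborSet]

lemma mem_cnUnion {L : List V} {y : V} : y ∈ cnUnion G L ↔ ∃ v ∈ L, y ∈ cn G v := by
  simp [cnUnion]

lemma cnUnion_nil : cnUnion G ([] : List V) = ∅ := by
  simp [cnUnion]

lemma cnUnion_cons (x : V) (L : List V) :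
    cnUnion G (x :: L) = cn G x ∪ cnUnion G L := by
  ext y; simp [mem_cnUnion, List.mem_cons, or_and_right, exists_or]

/-- Legality of a sequence relative to an already-covered set `C`, by recursion. -/
def LegAux (C : Set V) : List V → Prop
  | [] => True
  | x :: L => (cn G x \ C).Nonempty ∧ LegAux (C ∪ cn G x) L

/-- Self-footprinters of a sequence relative to an already-covered set `C`. -/
def SFAux (C : Set V) : List V → Set V
  | [] => ∅
  | x :: L => {v | v = x ∧ v ∉ C} ∪ SFAux (C ∪ cn G x) L

lemma legAux_nil (C : Set V) : LegAux G C ([] : List V) := trivial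

lemma legAux_cons {C : Set V} {x : V} {L : List V} :
    LegAux G C (x :: L) ↔ (cn G x \ C).Nonempty ∧ LegAux G (C ∪ cn G x) L := Iff.rfl

lemma sfAux_cons (C : Set V) (x : V) (L : List V) :
    SFAux G C (x :: L) = {v | v = x ∧ v ∉ C} ∪ SFAux G (C ∪ cn G x) L := rfl

lemma sfAux_nil (C : Set V) : SFAux G C ([] : List V) = ∅ := rfl

lemma legAux_mono : ∀ (S : List V) {C C' : Set V}, C ⊆ C' → LegAux G C' S → LegAux G C S := by
  intro S
  induction S with
  | nil => intro C C' _ _; trivial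
  | cons x L ih =>
    intro C C' h hx
    rw [legAux_cons] at hx ⊢
    exact ⟨hx.1.mono (Set.diff_subset_diff_right h),
      ih (Set.union_subset_union_left _ h) hx.2⟩

lemma sfAux_mono : ∀ (S : List V) {C C' : Set V}, C ⊆ C' → SFAux G C' S ⊆ SFAux G C S := by
  intro S
  induction S with
  | nil => intro C C' _; simp [sfAux_nil]
  | cons x L ih =>
    intro C C' h
    rw [sfAux_cons, sfAux_cons]
    apply Set.union_subset_union
    · intro v hv; exact ⟨hv.1, fun hc => hv.2 (h hc)⟩
    · exact ih (Set.union_subset_union_left _ h)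

lemma sfAux_not_mem : ∀ (S : List V) {C : Set V} {v : V}, v ∈ SFAux G C S → v ∉ C := by
  intro S
  induction S with
  | nil => intro C v hv; simp [sfAux_nil] at hv
  | cons x L ih =>
    intro C v hv
    rw [sfAux_cons] at hv
    rcases hv with ⟨_, hv⟩ | hv
    · exact hv
    · exact fun hc => ih hv (Or.inl hc)

lemma legAux_append {A B : List V} : ∀ {C : Set V},
    LegAux G C (A ++ B) ↔ LegAux G C A ∧ LegAux G (C ∪ cnUnion G A) B := by
  induction A with
  | nil =>
    intro C
    simp [legAux_nil, cnUnion_nil]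
  | cons x L ih =>
    intro C
    rw [List.cons_append, legAux_cons, legAux_cons, ih, cnUnion_cons, and_assoc,
      Set.union_assoc]

lemma sfAux_append {A B : List V} : ∀ {C : Set V},
    SFAux G C (A ++ B) = SFAux G C A ∪ SFAux G (C ∪ cnUnion G A) B := by
  induction A with
  | nil =>
    intro C
    simp [sfAux_nil, cnUnion_nil]
  | cons x L ih =>
    intro C
    rw [List.cons_append, sfAux_cons, sfAux_cons, ih, cnUnion_cons, Set.union_assoc,
      Set.union_assoc]

lemma legAux_iff_forall : ∀ (S : List V) (C : Set V), LegAux G C S ↔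
    ∀ i : Fin S.length, (cn G (S.get i) \ (C ∪ cnUnion G (S.take i))).Nonempty := by
  intro S
  induction S with
  | nil =>
    intro C
    constructor
    · intro _ i; exact i.elim0
    · intro _; trivial
  | cons x L ih =>
    intro C
    rw [legAux_cons, ih]
    constructor
    · rintro ⟨h1, h2⟩ ⟨iv, hiv⟩
      match iv, hiv with
      | 0, hiv => simpa [cnUnion_nil] using h1
      | (k+1), hiv =>
        have hk : k < L.length := by simpa using hiv
        have := h2 ⟨k, hk⟩
        simpa [cnUnion_cons, Set.union_assoc] using this
    · intro h
      constructor
      · have := h ⟨0, by simp⟩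
        simpa [cnUnion_nil] using this
      · intro ⟨k, hk⟩
        have := h ⟨k + 1, by simpa using hk⟩
        simpa [cnUnion_cons, Set.union_assoc] using this

lemma sfAux_iff_exists : ∀ (S : List V) (C : Set V) (v : V), v ∈ SFAux G C S ↔
    ∃ i : Fin S.length, S.get i = v ∧ v ∉ C ∪ cnUnion G (S.take i) := by
  intro S
  induction S with
  | nil =>
    intro C v
    constructor
    · intro h; simp [sfAux_nil] at h
    · rintro ⟨i, _⟩; exact i.elim0
  | cons x L ih =>
    intro C v
    rw [sfAux_cons]
    constructor
    · intro hv
      rcases hv with ⟨rfl, hv⟩ | hv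
      · exact ⟨⟨0, by simp⟩, rfl, by simp [cnUnion_nil, hv]⟩
      · obtain ⟨⟨k, hk⟩, hget, hmem⟩ := (ih (C ∪ cn G x) v).mp hv
        refine ⟨⟨k + 1, by simpa using hk⟩, hget, ?_⟩
        simpa [cnUnion_cons, Set.union_assoc] using hmem
    · rintro ⟨⟨iv, hiv⟩, hget, hmem⟩
      match iv, hiv, hget, hmem with
      | 0, hiv, hget, hmem =>
        left
        refine ⟨hget.symm, fun hc => hmem (Or.inl hc)⟩
      | (k+1), hiv, hget, hmem =>
        right
        have hk : k < L.length := by simpa using hiv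
        refine (ih (C ∪ cn G x) v).mpr ⟨⟨k, hk⟩, hget, ?_⟩
        simpa [cnUnion_cons, Set.union_assoc] using hmem

lemma isLegal_iff {S : List V} : IsLegal G S ↔
    S.Nodup ∧ (∀ v, ∃ u ∈ S, v ∈ cn G u) ∧ LegAux G ∅ S := by
  constructor
  · intro h
    refine ⟨h.nodup, h.dominates, (legAux_iff_forall G S ∅).mpr ?_⟩
    intro i
    simpa [PN, Set.empty_union] using h.legal i
  · intro ⟨h1, h2, h3⟩
    refine ⟨h1, h2, ?_⟩
    intro i
    simpa [PN, Set.empty_union] using (legAux_iff_forall G S ∅).mp h3 i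

lemma selfFoot_eq (S : List V) : selfFoot G S = SFAux G ∅ S := by
  ext v
  rw [sfAux_iff_exists]
  constructor
  · rintro ⟨i, hget, hv⟩
    exact ⟨i, hget, by simpa [Set.empty_union] using hv.2⟩
  · rintro ⟨i, hget, hv⟩
    exact ⟨i, hget, mem_cn_self G v, by simpa [Set.empty_union] using hv⟩

lemma isIndep_sfAux : ∀ (S : List V) (C : Set V) {u v : V},
    u ∈ SFAux G C S → v ∈ SFAux G C S → u ≠ v → ¬ G.Adj u v := by
  intro S
  induction S with
  | nil => intro C u v hu; simp [sfAux_nil] at hu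
  | cons x L ih =>
    intro C u v hu hv huv
    rw [sfAux_cons] at hu hv
    rcases hu with ⟨rfl, _⟩ | hu
    · rcases hv with ⟨rfl, _⟩ | hv
      · exact absurd rfl huv
      · have := sfAux_not_mem G L hv
        intro hadj
        exact this (Or.inr ((mem_cn G).mpr (Or.inr hadj)))
    · rcases hv with ⟨rfl, _⟩ | hv
      · have := sfAux_not_mem G L hu
        intro hadj
        exact this (Or.inr ((mem_cn G).mpr (Or.inr hadj.symm)))
      · exact ih _ hu hv huv

lemma isIndep_selfFoot (S : List V) : IsIndep G (selfFoot G S) := by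
  rw [selfFoot_eq]
  intro u hu v hv huv
  exact isIndep_sfAux G S ∅ hu hv huv

lemma exists_first_split {P : V → Prop} : ∀ {S : List V}, (∃ u ∈ S, P u) →
    ∃ A c B, S = A ++ c :: B ∧ P c ∧ ∀ a ∈ A, ¬ P a := by
  intro S
  induction S with
  | nil => rintro ⟨u, hu, _⟩; simp at hu
  | cons x L ih =>
    rintro ⟨u, hu, hPu⟩
    by_cases hx : P x
    · exact ⟨[], x, L, rfl, hx, by simp⟩
    · have hex : ∃ u ∈ L, P u := by
        rcases List.mem_cons.mp hu with rfl | h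
        · exact absurd hPu hx
        · exact ⟨u, h, hPu⟩
      obtain ⟨A, c, B, rfl, hc, hA⟩ := ih hex
      refine ⟨x :: A, c, B, rfl, hc, ?_⟩
      intro a ha
      rcases List.mem_cons.mp ha with rfl | h
      · exact hx
      · exact hA a h

/-- Key modification lemma: if `w` is a "corner" vertex (`N[w] ⊆ N[u]` whenever
`w ∈ N[u]`), then any legal dominating sequence can be transformed into one at
least as long, in which `w` footprints itself and which keeps all old
self-footprinters outside `N[w]`. -/
lemma improve (w : V) (hcorner : ∀ u : V, w ∈ cn G u → cn G w ⊆ cn G u)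
    (S : List V) (hS : IsLegal G S) :
    ∃ S', IsLegal G S' ∧ S.length ≤ S'.length ∧
      insert w (selfFoot G S \ cn G w) ⊆ selfFoot G S' := by
  classical
  obtain ⟨hnd, hdom, hleg⟩ := (isLegal_iff G).mp hS
  by_cases hw : w ∈ S
  · refine ⟨S, hS, le_rfl, ?_⟩
    obtain ⟨A, B, hAB⟩ := List.append_of_mem hw
    subst hAB
    obtain ⟨hlegA1, hlegA2⟩ := (legAux_append G).mp hleg
    rw [legAux_cons] at hlegA2
    have hne : (cn G w \ (∅ ∪ cnUnion G A)).Nonempty := hlegA2.1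
    have hwA : w ∉ cnUnion G A := by
      intro hmem
      obtain ⟨u, huA, hwu⟩ := (mem_cnUnion G).mp hmem
      have hsub : cn G w ⊆ cnUnion G A := fun y hy =>
        (mem_cnUnion G).mpr ⟨u, huA, hcorner u hwu hy⟩
      obtain ⟨y, hy1, hy2⟩ := hne
      exact hy2 (Or.inr (hsub hy1))
    have hwsf : w ∈ selfFoot G (A ++ w :: B) := by
      rw [selfFoot_eq, sfAux_append, sfAux_cons]
      exact Or.inr (Or.inl ⟨rfl, fun h => hwA (by simpa using h)⟩)
    intro v hv
    rcases Set.mem_insert_iff.mp hv with rfl | hv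
    · exact hwsf
    · exact hv.1
  · obtain ⟨A, c, B, hAB, hwc, hA⟩ := exists_first_split (P := fun u => w ∈ cn G u) (hdom w)
    subst hAB
    set C := cnUnion G A with hC
    have hwC : w ∉ C := by
      intro hmem
      obtain ⟨u, huA, hwu⟩ := (mem_cnUnion G).mp hmem
      exact hA u huA hwu
    have hsub : cn G w ⊆ cn G c := hcorner c hwc
    obtain ⟨hlegA1, hlegA2⟩ := (legAux_append G).mp hleg
    rw [legAux_cons] at hlegA2
    have hcne : (cn G c \ C).Nonempty := by
      have := hlegA2.1
      simpa [Set.empty_union] using this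
    have hlegB : LegAux G (C ∪ cn G c) B := by
      have := hlegA2.2
      have heq : ∅ ∪ C ∪ cn G c = C ∪ cn G c := by rw [Set.empty_union]
      rwa [heq] at this
    have hCwc : C ∪ cn G w ∪ cn G c = C ∪ cn G c := by
      rw [Set.union_assoc]
      congr 1
      exact Set.union_eq_right.mpr hsub
    by_cases hkeep : (cn G c \ (C ∪ cn G w)).Nonempty
    · -- keep c : S' = A ++ w :: c :: B
      have hgoal : ∀ v : V, v ∈ SFAux G ∅ A ∨ (v = w ∧ v ∉ C) ∨ (v = c ∧ v ∉ C ∪ cn G w) ∨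
          v ∈ SFAux G (C ∪ cn G c) B → v ∈ selfFoot G (A ++ w :: c :: B) := by
        intro v h
        rw [selfFoot_eq, sfAux_append, sfAux_cons, sfAux_cons]
        have e1 : (∅ : Set V) ∪ C = C := Set.empty_union C
        rw [e1, hCwc]
        rcases h with h | h | h | h
        · exact Or.inl h
        · exact Or.inr (Or.inl h)
        · exact Or.inr (Or.inr (Or.inl h))
        · exact Or.inr (Or.inr (Or.inr h))
      refine ⟨A ++ w :: c :: B, (isLegal_iff G).mpr ⟨?_, ?_, ?_⟩, by simp, ?_⟩
      · rw [List.nodup_middle, List.nodup_cons]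
        exact ⟨hw, hnd⟩
      · intro v
        obtain ⟨u, hu, hvu⟩ := hdom v
        refine ⟨u, ?_, hvu⟩
        simp only [List.mem_append, List.mem_cons] at hu ⊢
        tauto
      · rw [legAux_append, legAux_cons, legAux_cons]
        refine ⟨hlegA1, ⟨w, mem_cn_self G w, by simp [hwC]; exact hwC⟩, ?_, ?_⟩
        · simpa [Set.empty_union] using hkeep
        · have e1 : (∅ : Set V) ∪ C = C := Set.empty_union C
          rw [e1, hCwc]
          exact hlegB
      · intro v hv
        rcases Set.mem_insert_iff.mp hv with rfl | ⟨hvsf, hvw⟩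
        · exact hgoal v (Or.inr (Or.inl ⟨rfl, hwC⟩))
        · rw [selfFoot_eq, sfAux_append, sfAux_cons] at hvsf
          have e1 : (∅ : Set V) ∪ C = C := Set.empty_union C
          rw [e1] at hvsf
          rcases hvsf with h | ⟨rfl, hvC⟩ | h
          · exact hgoal v (Or.inl h)
          · exact hgoal v (Or.inr (Or.inr (Or.inl ⟨rfl, by simp [hvC, hvw]⟩)))
          · exact hgoal v (Or.inr (Or.inr (Or.inr h)))
    · -- drop c : S' = A ++ w :: B
      have hcc : cn G c ⊆ C ∪ cn G w := by
        rw [Set.not_nonempty_iff_eq_empty, Set.diff_eq_empty] at hkeep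
        exact hkeep
      have hwAB : w ∉ A ++ B := by
        intro h
        apply hw
        simp only [List.mem_append, List.mem_cons] at h ⊢
        tauto
      have hgoal : ∀ v : V, v ∈ SFAux G ∅ A ∨ (v = w ∧ v ∉ C) ∨
          v ∈ SFAux G (C ∪ cn G w) B → v ∈ selfFoot G (A ++ w :: B) := by
        intro v h
        rw [selfFoot_eq, sfAux_append, sfAux_cons]
        have e1 : (∅ : Set V) ∪ C = C := Set.empty_union C
        rw [e1]
        rcases h with h | h | h
        · exact Or.inl h
        · exact Or.inr (Or.inl h)
        · exact Or.inr (Or.inr h)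
      refine ⟨A ++ w :: B, (isLegal_iff G).mpr ⟨?_, ?_, ?_⟩, by simp, ?_⟩
      · rw [List.nodup_middle, List.nodup_cons]
        refine ⟨hwAB, ?_⟩
        have hsb : (A ++ B).Sublist (A ++ c :: B) :=
          (List.sublist_cons_self c B).append_left A
        exact hnd.sublist hsb
      · intro v
        obtain ⟨u, hu, hvu⟩ := hdom v
        by_cases huc : u = c
        · subst huc
          rcases hcc hvu with hvC | hvw
          · obtain ⟨a, haA, hva⟩ := (mem_cnUnion G).mp hvC
            exact ⟨a, by simp [haA], hva⟩
          · exact ⟨w, by simp, hvw⟩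
        · refine ⟨u, ?_, hvu⟩
          simp only [List.mem_append, List.mem_cons] at hu ⊢
          tauto
      · rw [legAux_append, legAux_cons]
        refine ⟨hlegA1, ⟨w, mem_cn_self G w, by simp [hwC]; exact hwC⟩, ?_⟩
        have e1 : (∅ : Set V) ∪ C = C := Set.empty_union C
        rw [e1]
        exact legAux_mono G B (Set.union_subset_union_right C hsub) hlegB
      · intro v hv
        rcases Set.mem_insert_iff.mp hv with rfl | ⟨hvsf, hvw⟩
        · exact hgoal v (Or.inr (Or.inl ⟨rfl, hwC⟩))
        · rw [selfFoot_eq, sfAux_append, sfAux_cons] at hvsf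
          have e1 : (∅ : Set V) ∪ C = C := Set.empty_union C
          rw [e1] at hvsf
          rcases hvsf with h | ⟨rfl, hvC⟩ | h
          · exact hgoal v (Or.inl h)
          · exact absurd (hcc (mem_cn_self G v)) (by simp [hvC, hvw])
          · exact hgoal v (Or.inr (Or.inr
              (sfAux_mono G B (Set.union_subset_union_right C hsub) h)))

lemma exists_isLegal [Fintype V] : ∃ S : List V, IsLegal G S := by
  classical
  suffices h : ∀ k (S : List V), S.Nodup → LegAux G ∅ S →
      Fintype.card V ≤ S.length + k → ∃ T, IsLegal G T by
    exact h (Fintype.card V) [] List.nodup_nil trivial (by simp)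
  intro k
  induction k with
  | zero =>
    intro S hnd hleg hcard
    refine ⟨S, (isLegal_iff G).mpr ⟨hnd, ?_, hleg⟩⟩
    intro v
    refine ⟨v, ?_, mem_cn_self G v⟩
    have hlen : S.length = Fintype.card V :=
      le_antisymm (List.Nodup.length_le_card hnd) (by simpa using hcard)
    have huniv : S.toFinset = Finset.univ := by
      apply Finset.eq_univ_of_card
      rw [List.toFinset_card_of_nodup hnd, hlen]
    rw [← List.mem_toFinset, huniv]
    exact Finset.mem_univ v
  | succ k ih =>
    intro S hnd hleg hcard
    by_cases hdom : ∀ v, ∃ u ∈ S, v ∈ cn G u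
    · exact ⟨S, (isLegal_iff G).mpr ⟨hnd, hdom, hleg⟩⟩
    · push_neg at hdom
      obtain ⟨v, hv⟩ := hdom
      have hvS : v ∉ S := fun h => hv v h (mem_cn_self G v)
      refine ih (S ++ [v]) ?_ ?_ ?_
      · simp [List.nodup_append, hnd, hvS]
        exact fun a ha h => hvS (h ▸ ha)
      · rw [legAux_append]
        refine ⟨hleg, ?_⟩
        rw [legAux_cons]
        refine ⟨⟨v, mem_cn_self G v, ?_⟩, trivial⟩
        intro hmem
        rcases hmem with h | h
        · exact h.elim
        · obtain ⟨u, hu, hvu⟩ := (mem_cnUnion G).mp h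
          exact hv u hu hvu
      · simp only [List.length_append, List.length_singleton]
        omega

lemma mem_cn_pathPow {n m : ℕ} {u v : Fin n} :
    v ∈ cn (pathPow n m) u ↔ Nat.dist v.val u.val ≤ m := by
  rw [mem_cn]
  constructor
  · rintro (rfl | h)
    · simp [Nat.dist_self]
    · obtain ⟨hne, hd⟩ : u ≠ v ∧ Nat.dist u.val v.val ≤ m := h
      rwa [Nat.dist_comm]
  · intro h
    by_cases hv : v = u
    · exact Or.inl hv
    · exact Or.inr (show u ≠ v ∧ Nat.dist u.val v.val ≤ m from ⟨fun e => hv e.symm, by rwa [Nat.dist_comm]⟩)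

end Aux



/-- for every nonempty independent set `I` of `P_n^m` there is an
independent set `I'` with `min(I') ≤ m+1` and `max(I') ≥ n-m` such that
`γ_gr(P_n^m, I) ≤ γ_gr(P_n^m, I')` (vertices `0`-based: `j` represents `j+1 ∈ [n]`). -/
theorem stmt12 (n m : ℕ) (hm : 1 ≤ m) (hn : m + 2 ≤ n)
    (I : Finset (Fin n)) (hne : I.Nonempty) (hind : IsIndep (pathPow n m) ↑I) :
    ∃ I' : Finset (Fin n), ∃ hne' : I'.Nonempty, IsIndep (pathPow n m) ↑I' ∧
      ((I'.min' hne').val : ℤ) + 1 ≤ m + 1 ∧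
      (n : ℤ) - m ≤ ((I'.max' hne').val : ℤ) + 1 ∧
      gammaGrOn (pathPow n m) ↑I ≤ gammaGrOn (pathPow n m) ↑I' := by
  classical
  set G := pathPow n m with hG
  have hn0 : 0 < n := by omega
  set z : Fin n := ⟨0, hn0⟩ with hz0
  set e : Fin n := ⟨n - 1, by omega⟩ with he0
  -- corner properties
  have hcz : ∀ u : Fin n, z ∈ cn G u → cn G z ⊆ cn G u := by
    intro u hu x hx
    rw [mem_cn_pathPow] at hu hx ⊢
    simp only [hz0, Nat.dist] at hu hx ⊢
    omega
  have hce : ∀ u : Fin n, e ∈ cn G u → cn G e ⊆ cn G u := by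
    intro u hu x hx
    rw [mem_cn_pathPow] at hu hx ⊢
    have h1 := u.isLt
    have h2 := x.isLt
    simp only [he0, Nat.dist] at hu hx ⊢
    omega
  -- a legal dominating sequence at least as long as gammaGrOn G ↑I
  have hbddgen : ∀ J : Set (Fin n), BddAbove
      {k | ∃ S : List (Fin n), IsLegal G S ∧ selfFoot G S = J ∧ S.length = k} := by
    intro J
    refine ⟨n, ?_⟩
    rintro k ⟨S, hS, -, rfl⟩
    have := List.Nodup.length_le_card hS.nodup
    simpa using this
  obtain ⟨S0, hS0, hlen0⟩ : ∃ S0 : List (Fin n), IsLegal G S0 ∧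
      gammaGrOn G ↑I ≤ S0.length := by
    by_cases hK : {k | ∃ S : List (Fin n), IsLegal G S ∧ selfFoot G S = ↑I ∧
        S.length = k}.Nonempty
    · have hmem := Nat.sSup_mem hK (hbddgen ↑I)
      obtain ⟨S, hS, -, hlen⟩ := hmem
      exact ⟨S, hS, le_of_eq (by rw [gammaGrOn, hlen])⟩
    · have h0 : gammaGrOn G ↑I = 0 := by
        rw [gammaGrOn, Set.not_nonempty_iff_eq_empty.mp hK, show sSup ∅ = 0 from by simpa using csSup_empty (α := ℕ)]
      obtain ⟨S, hS⟩ := exists_isLegal G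
      exact ⟨S, hS, by omega⟩
  obtain ⟨S1, hS1, hl1, hsf1⟩ := improve G e hce S0 hS0
  obtain ⟨S2, hS2, hl2, hsf2⟩ := improve G z hcz S1 hS1
  have hzsf : z ∈ selfFoot G S2 := hsf2 (Set.mem_insert _ _)
  have hez : e ∉ cn G z := by
    rw [mem_cn_pathPow]
    simp only [he0, hz0, Nat.dist]
    omega
  have hesf : e ∈ selfFoot G S2 :=
    hsf2 (Set.mem_insert_iff.mpr (Or.inr ⟨hsf1 (Set.mem_insert _ _), hez⟩))
  refine ⟨(Set.toFinite (selfFoot G S2)).toFinset, ?_, ?_, ?_, ?_, ?_⟩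
  · exact ⟨z, (Set.Finite.mem_toFinset (Set.toFinite (selfFoot G S2))).mpr hzsf⟩
  · rw [Set.Finite.coe_toFinset]
    exact isIndep_selfFoot G S2
  · have hle := Finset.min'_le _ z ((Set.Finite.mem_toFinset (Set.toFinite (selfFoot G S2))).mpr hzsf)
    have hval : ((Set.toFinite (selfFoot G S2)).toFinset.min' _).val ≤ 0 := hle
    omega
  · have hle := Finset.le_max' _ e ((Set.Finite.mem_toFinset (Set.toFinite (selfFoot G S2))).mpr hesf)
    have hval : n - 1 ≤ ((Set.toFinite (selfFoot G S2)).toFinset.max' _).val := hle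
    omega
  · have hmem : S2.length ∈ {k | ∃ S : List (Fin n), IsLegal G S ∧
        selfFoot G S = ↑((Set.toFinite (selfFoot G S2)).toFinset) ∧ S.length = k} :=
      ⟨S2, hS2, by rw [Set.Finite.coe_toFinset], rfl⟩
    calc gammaGrOn G ↑I ≤ S0.length := hlen0
      _ ≤ S2.length := le_trans hl1 hl2
      _ ≤ gammaGrOn G ↑((Set.toFinite (selfFoot G S2)).toFinset) := by
          rw [gammaGrOn]
          exact le_csSup (hbddgen _) hmem
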